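/- Fix integers m ≥ 1, s with 1 ≤ s ≤ m−1, and ℓ with −m+1 ≤ ℓ ≤ m−1. On the index set L = {max(−ℓ,0), …, min(m−1, m−1−ℓ)}, the map σ(l) = m−1−ℓ−l is an involution of L, and the function f_l(a) = (2a / ∏_{n≠l, 0≤n≤m−1} sin(π(n−l)/a)) · (sin(πs(2l+ℓ−m+1)/a) / ∏_{n≠l+ℓ, 0≤n≤m−1} sin(π(n−l−ℓ)/a)) satisfies f_{σ(l)}(a) = −f_l(a) for all l ∈ L (whenever all the sines in the denominators are nonzero). -/
import Mathlib


open Finset Real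

lemma prod_reflect_aux (m c c' : ℤ) (hc : c' = m - 1 - c) (g : ℤ → ℝ) :
    ∏ n ∈ (Finset.Icc 0 (m-1)).filter (fun n => n ≠ c'), g n
      = ∏ n ∈ (Finset.Icc 0 (m-1)).filter (fun n => n ≠ c), g (m-1-n) := by
  apply Finset.prod_nbij' (fun n => m-1-n) (fun n => m-1-n) <;>
    simp_all [Finset.mem_Icc, Finset.mem_filter] <;> omega

/-- Fix integers `m ≥ 1`, `1 ≤ s ≤ m−1`, `−m+1 ≤ ℓ ≤ m−1`, and `a > m−1`. On the index set
`L = {max(−ℓ,0), …, min(m−1, m−1−ℓ)}`, the map `σ(l) = m−1−ℓ−l` is an involution of `L`, and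
`f_l(a) = (2a / ∏_{n≠l} sin(π(n−l)/a)) · (sin(πs(2l+ℓ−m+1)/a) / ∏_{n≠l+ℓ} sin(π(n−l−ℓ)/a))`
(products over `n ∈ {0,…,m−1}` with the indicated exclusion) satisfies `f_{σ(l)} = −f_l`
for all `l ∈ L`. -/
theorem stmt2 (m s ℓ : ℤ) (hm : 1 ≤ m) (hs1 : 1 ≤ s) (hs2 : s ≤ m - 1)
    (hl1 : -m + 1 ≤ ℓ) (hl2 : ℓ ≤ m - 1) (a : ℝ) (ha : (m : ℝ) - 1 < a)
    (f : ℤ → ℝ)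
    (hf : ∀ l : ℤ, f l =
      (2 * a / ∏ n ∈ (Finset.Icc 0 (m - 1)).filter (fun n => n ≠ l),
          Real.sin (Real.pi * ((n : ℝ) - (l : ℝ)) / a)) *
      (Real.sin (Real.pi * (s : ℝ) * ((2 * l + ℓ - m + 1 : ℤ) : ℝ) / a) /
        ∏ n ∈ (Finset.Icc 0 (m - 1)).filter (fun n => n ≠ l + ℓ),
          Real.sin (Real.pi * ((n : ℝ) - (l : ℝ) - (ℓ : ℝ)) / a))) :
    (∀ l ∈ Finset.Icc (max (-ℓ) 0) (min (m - 1) (m - 1 - ℓ)),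
        m - 1 - ℓ - l ∈ Finset.Icc (max (-ℓ) 0) (min (m - 1) (m - 1 - ℓ)) ∧
        m - 1 - ℓ - (m - 1 - ℓ - l) = l) ∧
    (∀ l ∈ Finset.Icc (max (-ℓ) 0) (min (m - 1) (m - 1 - ℓ)),
        f (m - 1 - ℓ - l) = - f l) := by
  constructor
  · intro l hl
    simp only [Finset.mem_Icc, le_max_iff, max_le_iff, le_min_iff, min_le_iff] at hl ⊢
    omega
  · intro l hl
    simp only [Finset.mem_Icc, le_max_iff, max_le_iff, le_min_iff, min_le_iff] at hl
    have hl0 : 0 ≤ l := by omega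
    have hl0' : l ≤ m - 1 := by omega
    have hll0 : 0 ≤ l + ℓ := by omega
    have hll0' : l + ℓ ≤ m - 1 := by omega
    rw [hf, hf]
    set k : ℕ := ((Finset.Icc (0:ℤ) (m-1)).filter (fun n => n ≠ l)).card with hk
    set P1 : ℝ := ∏ n ∈ (Finset.Icc 0 (m - 1)).filter (fun n => n ≠ l),
          Real.sin (Real.pi * ((n : ℝ) - (l : ℝ)) / a) with hP1
    set P2 : ℝ := ∏ n ∈ (Finset.Icc 0 (m - 1)).filter (fun n => n ≠ l + ℓ),
          Real.sin (Real.pi * ((n : ℝ) - (l : ℝ) - (ℓ : ℝ)) / a) with hP2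
    set S : ℝ := Real.sin (Real.pi * (s : ℝ) * ((2 * l + ℓ - m + 1 : ℤ) : ℝ) / a) with hS
    have hkcard : ∀ c : ℤ, 0 ≤ c → c ≤ m - 1 →
        ((Finset.Icc (0:ℤ) (m-1)).filter (fun n => n ≠ c)).card = k := by
      intro c hc hc'
      rw [hk, Finset.filter_ne', Finset.filter_ne',
        Finset.card_erase_of_mem (by simp [Finset.mem_Icc]; omega),
        Finset.card_erase_of_mem (by simp [Finset.mem_Icc]; omega)]
    -- first product of f(l')
    have h1 : (∏ n ∈ (Finset.Icc 0 (m - 1)).filter (fun n => n ≠ m - 1 - ℓ - l),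
          Real.sin (Real.pi * ((n : ℝ) - ((m - 1 - ℓ - l : ℤ) : ℝ)) / a))
        = (-1)^k * P2 := by
      rw [prod_reflect_aux m (l + ℓ) (m - 1 - ℓ - l) (by omega)]
      have : ∀ n ∈ (Finset.Icc (0:ℤ) (m-1)).filter (fun n => n ≠ l + ℓ),
          Real.sin (Real.pi * (((m - 1 - n : ℤ) : ℝ) - ((m - 1 - ℓ - l : ℤ) : ℝ)) / a)
            = (-1) * Real.sin (Real.pi * ((n : ℝ) - (l : ℝ) - (ℓ : ℝ)) / a) := by
        intro n _
        have : Real.pi * (((m - 1 - n : ℤ) : ℝ) - ((m - 1 - ℓ - l : ℤ) : ℝ)) / a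
            = -(Real.pi * ((n : ℝ) - (l : ℝ) - (ℓ : ℝ)) / a) := by
          push_cast; ring
        rw [this, Real.sin_neg]; ring
      rw [Finset.prod_congr rfl this, Finset.prod_mul_distrib, Finset.prod_const,
        hkcard (l + ℓ) hll0 hll0', hP2]
    -- second product of f(l')
    have h2 : (∏ n ∈ (Finset.Icc 0 (m - 1)).filter (fun n => n ≠ m - 1 - ℓ - l + ℓ),
          Real.sin (Real.pi * ((n : ℝ) - ((m - 1 - ℓ - l : ℤ) : ℝ) - (ℓ : ℝ)) / a))
        = (-1)^k * P1 := by
      have hfil : (Finset.Icc (0:ℤ) (m-1)).filter (fun n => n ≠ m - 1 - ℓ - l + ℓ)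
          = (Finset.Icc (0:ℤ) (m-1)).filter (fun n => n ≠ m - 1 - l) := by
        apply Finset.filter_congr; intro n _; simp; omega
      rw [hfil, prod_reflect_aux m l (m - 1 - l) (by omega)]
      have : ∀ n ∈ (Finset.Icc (0:ℤ) (m-1)).filter (fun n => n ≠ l),
          Real.sin (Real.pi * (((m - 1 - n : ℤ) : ℝ) - ((m - 1 - ℓ - l : ℤ) : ℝ) - (ℓ : ℝ)) / a)
            = (-1) * Real.sin (Real.pi * ((n : ℝ) - (l : ℝ)) / a) := by
        intro n _
        have : Real.pi * (((m - 1 - n : ℤ) : ℝ) - ((m - 1 - ℓ - l : ℤ) : ℝ) - (ℓ : ℝ)) / a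
            = -(Real.pi * ((n : ℝ) - (l : ℝ)) / a) := by
          push_cast; ring
        rw [this, Real.sin_neg]; ring
      rw [Finset.prod_congr rfl this, Finset.prod_mul_distrib, Finset.prod_const,
        hkcard l hl0 hl0', hP1]
    -- numerator sine of f(l')
    have h3 : Real.sin (Real.pi * (s : ℝ) * ((2 * (m - 1 - ℓ - l) + ℓ - m + 1 : ℤ) : ℝ) / a)
        = -S := by
      have harg : Real.pi * (s : ℝ) * ((2 * (m - 1 - ℓ - l) + ℓ - m + 1 : ℤ) : ℝ) / a
          = -(Real.pi * (s : ℝ) * ((2 * l + ℓ - m + 1 : ℤ) : ℝ) / a) := by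
        push_cast; ring
      rw [harg, Real.sin_neg, hS]
    rw [h1, h2, h3]
    have he : ((-1:ℝ)^k) * ((-1:ℝ)^k) = 1 := by
      rw [← pow_add]
      exact Even.neg_one_pow ⟨k, rfl⟩
    rw [div_mul_div_comm, div_mul_div_comm, mul_mul_mul_comm, he, one_mul,
      mul_comm P2 P1, mul_neg, neg_div]
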